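/- Let a ∈ C²(ℝ) with a(s) ≥ ν > 0 for all s ∈ ℝ, let k > 0 and a₁ > 0, and assume lim_{s→+∞} a(s)/s^k = a₁. Let g be the solution of g'(s) = 1/√(a(g(s))), g(0) = 0. Then lim_{s→+∞} g(s)/s^{2/(k+2)} = c₁, where c₁ = ((k+2)/(2√a₁))^{2/(k+2)}. -/

import Mathlib

open Filter Real Topology

theorem g_asymptotics_at_infinity
    (a : ℝ → ℝ) (ν : ℝ) (hν : 0 < ν)
    (ha : ContDiff ℝ 2 a) (hbound : ∀ s, ν ≤ a s)
    (k a₁ : ℝ) (hk : 0 < k) (ha₁ : 0 < a₁)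
    (hlim : Tendsto (fun s : ℝ => a s / s ^ k) atTop (𝓝 a₁))
    (g : ℝ → ℝ)
    (hg : ∀ s, HasDerivAt g (1 / Real.sqrt (a (g s))) s) (hg0 : g 0 = 0) :
    Tendsto (fun s : ℝ => g s / s ^ (2 / (k + 2))) atTop
      (𝓝 (((k + 2) / (2 * Real.sqrt a₁)) ^ (2 / (k + 2)))) := by
  have haC : Continuous a := ha.continuous
  set f : ℝ → ℝ := fun u => Real.sqrt (a u) with hf_def
  have hfC : Continuous f := haC.sqrt
  have hfpos : ∀ u, 0 < f u := fun u => Real.sqrt_pos.mpr (lt_of_lt_of_le hν (hbound u))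
  set F : ℝ → ℝ := fun y => ∫ u in (0:ℝ)..y, f u with hF_def
  have hFderiv : ∀ y, HasDerivAt F (f y) y := fun y =>
    intervalIntegral.integral_hasDerivAt_right (hfC.intervalIntegrable _ _)
      (hfC.stronglyMeasurableAtFilter _ _) hfC.continuousAt
  -- F (g s) = s
  have hGF : ∀ s, F (g s) = s := by
    have hd : ∀ s, HasDerivAt (fun s => F (g s) - s) 0 s := by
      intro s
      have hne : Real.sqrt (a (g s)) ≠ 0 := (hfpos (g s)).ne'
      have h1 : HasDerivAt (fun s => F (g s)) (f (g s) * (1 / Real.sqrt (a (g s)))) s :=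
        (hFderiv (g s)).comp s (hg s)
      have h1' : HasDerivAt (fun s => F (g s)) 1 s := by
        convert h1 using 1
        simp only [hf_def]
        field_simp
      have h3 : HasDerivAt (fun s => F (g s) - s) (1 - 1) s := h1'.sub (hasDerivAt_id' s)
      simpa using h3
    have hconst : ∀ s : ℝ, F (g s) - s = F (g 0) - 0 := by
      intro s
      have hdiff : Differentiable ℝ (fun s => F (g s) - s) := fun s => (hd s).differentiableAt
      have hzero : ∀ s, deriv (fun s => F (g s) - s) s = 0 := fun s => (hd s).deriv
      exact is_const_of_deriv_eq_zero hdiff hzero s 0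
    intro s
    have := hconst s
    rw [hg0] at this
    have hF0 : F (0 : ℝ) = 0 := by simp [hF_def]
    rw [hF0] at this
    linarith
  have hFmono : StrictMono F := strictMono_of_hasDerivAt_pos hFderiv hfpos
  have hg_top : Tendsto g atTop atTop := by
    rw [tendsto_atTop_atTop]
    intro b
    exact ⟨F b, fun s hs => hFmono.le_iff_le.mp (by rw [hGF]; exact hs)⟩
  have hk2 : (0:ℝ) < k + 2 := by linarith
  set p : ℝ := (k + 2) / 2 with hp_def
  have hp : 0 < p := by positivity
  have hp1 : 1 ≤ p := by rw [hp_def]; linarith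
  set L := Real.sqrt a₁ with hL_def
  have hL : 0 < L := Real.sqrt_pos.mpr ha₁
  -- f u / u^(k/2) → L
  have hfk : Tendsto (fun u => f u / u ^ (k/2)) atTop (𝓝 L) := by
    have h1 : Tendsto (fun s => Real.sqrt (a s / s ^ k)) atTop (𝓝 L) :=
      (Real.continuous_sqrt.tendsto a₁).comp hlim
    apply h1.congr'
    filter_upwards [eventually_gt_atTop (0:ℝ)] with u hu
    rw [Real.sqrt_div (le_trans hν.le (hbound u)), Real.sqrt_eq_rpow (u ^ k),
      ← Real.rpow_mul hu.le, mul_one_div]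
  -- asymptotics of F
  have hFlim : Tendsto (fun y => F y / y ^ p) atTop (𝓝 (L / p)) := by
    rw [Metric.tendsto_atTop]
    intro ε hε
    obtain ⟨M₀, hM₀⟩ := Metric.tendsto_atTop.mp hfk (ε/2) (by positivity)
    set M := max M₀ 1 with hM_def
    have hM1 : (1:ℝ) ≤ M := le_max_right _ _
    have hM0 : (0:ℝ) < M := lt_of_lt_of_le one_pos hM1
    have hbound2 : ∀ u, M ≤ u → |f u - L * u ^ (k/2)| ≤ ε/2 * u ^ (k/2) := by
      intro u hu
      have hu0 : 0 < u := lt_of_lt_of_le hM0 hu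
      have hup : 0 < u ^ (k/2) := Real.rpow_pos_of_pos hu0 _
      have h0 := hM₀ u (le_trans (le_max_left _ _) hu)
      rw [Real.dist_eq] at h0
      have heq0 : f u - L * u ^ (k/2) = (f u / u ^ (k/2) - L) * u ^ (k/2) := by
        field_simp
      rw [heq0, abs_mul, abs_of_pos hup]
      exact mul_le_mul_of_nonneg_right h0.le hup.le
    set C := |F M - L * M ^ p / p| with hC_def
    have hkp : k/2 + 1 = p := by rw [hp_def]; ring
    have hkey : ∀ y, M ≤ y → |F y / y ^ p - L / p| ≤ C / y ^ p + ε/2 := by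
      intro y hy
      have hy0 : 0 < y := lt_of_lt_of_le hM0 hy
      have hyp : 0 < y ^ p := Real.rpow_pos_of_pos hy0 _
      have hMp : 0 ≤ M ^ p := (Real.rpow_pos_of_pos hM0 _).le
      have hcont_r : ContinuousOn (fun u : ℝ => u ^ (k/2)) (Set.uIcc M y) := by
        apply ContinuousOn.rpow_const continuousOn_id
        intro u hu
        rw [Set.uIcc_of_le hy] at hu
        exact Or.inl (lt_of_lt_of_le hM0 hu.1).ne'
      have hi1 : IntervalIntegrable f MeasureTheory.volume M y := hfC.intervalIntegrable _ _
      have hi2 : IntervalIntegrable (fun u : ℝ => u ^ (k/2)) MeasureTheory.volume M y :=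
        hcont_r.intervalIntegrable
      have hsplit : F y = F M + ∫ u in M..y, f u :=
        (intervalIntegral.integral_add_adjacent_intervals
          (hfC.intervalIntegrable _ _) hi1).symm
      have hint_r : (∫ u in M..y, u ^ (k/2)) = (y ^ p - M ^ p) / p := by
        rw [integral_rpow (Or.inl (by linarith : (-1:ℝ) < k/2)), hkp]
      have hest : |(∫ u in M..y, f u) - L * (y ^ p - M ^ p) / p| ≤ ε/2 * y ^ p := by
        have h1 : (∫ u in M..y, f u) - L * (y ^ p - M ^ p) / p
            = ∫ u in M..y, (f u - L * u ^ (k/2)) := by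
          rw [intervalIntegral.integral_sub hi1 (hi2.const_mul L),
            intervalIntegral.integral_const_mul, hint_r]
          ring
        rw [h1]
        calc |∫ u in M..y, (f u - L * u ^ (k/2))|
            ≤ ∫ u in M..y, |f u - L * u ^ (k/2)| :=
              intervalIntegral.abs_integral_le_integral_abs hy
          _ ≤ ∫ u in M..y, ε/2 * u ^ (k/2) := by
              apply intervalIntegral.integral_mono_on hy
                (hi1.sub (hi2.const_mul L)).abs (hi2.const_mul (ε/2))
              intro u hu
              exact hbound2 u hu.1
          _ = ε/2 * ((y ^ p - M ^ p) / p) := by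
              rw [intervalIntegral.integral_const_mul, hint_r]
          _ ≤ ε/2 * y ^ p := by
              apply mul_le_mul_of_nonneg_left _ (by positivity)
              rw [div_le_iff₀ hp]
              nlinarith [hyp.le]
      have hsum : F y - L * y ^ p / p
          = (F M - L * M ^ p / p) + ((∫ u in M..y, f u) - L * (y ^ p - M ^ p) / p) := by
        rw [hsplit]; ring
      have habs : |F y - L * y ^ p / p| ≤ C + ε/2 * y ^ p := by
        rw [hsum]
        exact le_trans (abs_add_le _ _) (add_le_add le_rfl hest)
      have heq : F y / y ^ p - L / p = (F y - L * y ^ p / p) / y ^ p := by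
        field_simp
      rw [heq, abs_div, abs_of_pos hyp]
      rw [div_le_iff₀ hyp]
      calc |F y - L * y ^ p / p| ≤ C + ε/2 * y ^ p := habs
        _ = (C / y ^ p + ε/2) * y ^ p := by field_simp
    have htop : Tendsto (fun y : ℝ => C / y ^ p) atTop (𝓝 0) :=
      Tendsto.div_atTop tendsto_const_nhds (tendsto_rpow_atTop hp)
    have hev : ∀ᶠ y in atTop, C / y ^ p < ε/2 :=
      htop.eventually (gt_mem_nhds (by positivity))
    obtain ⟨N₁, hN₁⟩ := eventually_atTop.mp hev
    refine ⟨max N₁ M, fun y hy => ?_⟩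
    have hyM : M ≤ y := le_trans (le_max_right _ _) hy
    have hyN : N₁ ≤ y := le_trans (le_max_left _ _) hy
    rw [Real.dist_eq]
    calc |F y / y ^ p - L / p| ≤ C / y ^ p + ε/2 := hkey y hyM
      _ < ε/2 + ε/2 := by linarith [hN₁ y hyN]
      _ = ε := by ring
  -- composition and inversion
  have h2 : Tendsto (fun s => s / g s ^ p) atTop (𝓝 (L / p)) := by
    have h1 : Tendsto (fun s => F (g s) / g s ^ p) atTop (𝓝 (L / p)) :=
      hFlim.comp hg_top
    exact h1.congr fun s => by rw [hGF]
  have hc : Tendsto (fun s => g s ^ p / s) atTop (𝓝 (p / L)) := by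
    have := h2.inv₀ (div_pos hL hp).ne'
    simpa [inv_div] using this
  have hfinal : Tendsto (fun s => (g s ^ p / s) ^ (1/p)) atTop (𝓝 ((p / L) ^ (1/p))) :=
    ((Real.continuousAt_rpow_const _ _ (Or.inl (div_pos hp hL).ne')).tendsto).comp hc
  have heq1 : (1:ℝ)/p = 2/(k+2) := by rw [hp_def, one_div_div]
  have heq2 : p / L = (k+2) / (2 * L) := by rw [hp_def, div_div]
  have : Tendsto (fun s => (g s ^ p / s) ^ (1/p)) atTop
      (𝓝 (((k + 2) / (2 * Real.sqrt a₁)) ^ (2 / (k + 2)))) := by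
    rw [← heq1, ← hL_def, ← heq2]; exact hfinal
  apply this.congr'
  filter_upwards [eventually_gt_atTop (0:ℝ), hg_top.eventually (eventually_gt_atTop (0:ℝ))]
    with s hs hgs
  rw [Real.div_rpow (Real.rpow_nonneg hgs.le p) hs.le, ← Real.rpow_mul hgs.le,
    mul_one_div, div_self hp.ne', Real.rpow_one, heq1]
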